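/- Let d be a positive integer, α ∈ (0,2), β > 0, s ≥ 0, and let μ be a nonzero finite Borel measure on ℝ^d with closed support S. Then there is a constant C > 0, depending only on α and d, such that for every k > 0, every t > 0 and every x ∈ ℝ^d, h_k(t,x) ≤ C · k · μ(ℝ^d) · max(t^{-1/β − s/α}, t^{-1/β}) · W(t^{-1/α} d(x,S)). -/

import Mathlib

open MeasureTheory Metric Set Filter Topology

/-- The profile function `W(r) = log(e + r²)/(1 + r^{d+α})`. -/
noncomputable def Wfn (d : ℕ) (α r : ℝ) : ℝ :=
  Real.log (Real.exp 1 + r ^ 2) / (1 + r ^ ((d : ℝ) + α))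

/-- `w_t(x) = t^{-1/β}(1 + t^{-s/α}) W(t^{-1/α}|x|)`. -/
noncomputable def wfn (d : ℕ) (α β s t : ℝ) (x : EuclideanSpace ℝ (Fin d)) : ℝ :=
  t ^ (-(1:ℝ)/β) * (1 + t ^ (-s/α)) * Wfn d α (t ^ (-(1:ℝ)/α) * ‖x‖)

/-- `h_k(t,x) = k ∫ w_t(x - y) dμ(y)`. -/
noncomputable def hfn (d : ℕ) (α β s : ℝ) (μ : Measure (EuclideanSpace ℝ (Fin d)))
    (k t : ℝ) (x : EuclideanSpace ℝ (Fin d)) : ℝ :=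
  k * ∫ y, wfn d α β s t (x - y) ∂μ

/-- `S` is the closed support of `μ`. -/
def IsSupportOf (d : ℕ) (μ : Measure (EuclideanSpace ℝ (Fin d)))
    (S : Set (EuclideanSpace ℝ (Fin d))) : Prop :=
  IsClosed S ∧ μ Sᶜ = 0 ∧ ∀ x ∈ S, ∀ r : ℝ, 0 < r → 0 < μ (ball x r)

/-- Condition (F2)-s with constant `Cund` on the set `S`. -/
def IsF2 (d : ℕ) (μ : Measure (EuclideanSpace ℝ (Fin d)))
    (S : Set (EuclideanSpace ℝ (Fin d))) (Cund s : ℝ) : Prop :=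
  ∀ x ∈ S, ∀ r : ℝ, 0 < r → r ≤ 1 →
    ENNReal.ofReal (Cund * r ^ s) ≤ μ (closedBall x r)


lemma logE_ge_one (r : ℝ) : 1 ≤ Real.log (Real.exp 1 + r ^ 2) := by
  have h : Real.exp 1 ≤ Real.exp 1 + r ^ 2 := by nlinarith [sq_nonneg r]
  calc (1:ℝ) = Real.log (Real.exp 1) := (Real.log_exp 1).symm
    _ ≤ _ := Real.log_le_log (Real.exp_pos 1) h

lemma logE_le (r : ℝ) (hr : 0 ≤ r) : Real.log (Real.exp 1 + r ^ 2) ≤ 1 + 2 * r := by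
  have he : (2:ℝ) ≤ Real.exp 1 := by have := Real.add_one_le_exp 1; linarith
  have h1 : Real.exp 1 + r ^ 2 ≤ Real.exp 1 * (1 + r) ^ 2 := by nlinarith
  have hpos : (0:ℝ) < Real.exp 1 + r ^ 2 := by nlinarith [sq_nonneg r]
  have h2 : Real.log (Real.exp 1 + r ^ 2) ≤ Real.log (Real.exp 1 * (1 + r) ^ 2) :=
    Real.log_le_log hpos h1
  have h1r : (0:ℝ) < 1 + r := by linarith
  rw [Real.log_mul (Real.exp_pos 1).ne' (by positivity), Real.log_exp, Real.log_pow] at h2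
  have h3 : Real.log (1 + r) ≤ r := by
    have := Real.log_le_sub_one_of_pos h1r; linarith
  push_cast at h2
  linarith

lemma Wfn_nonneg (d : ℕ) (α r : ℝ) (hr : 0 ≤ r) : 0 ≤ Wfn d α r := by
  unfold Wfn
  have h1 : (0:ℝ) ≤ Real.log (Real.exp 1 + r ^ 2) := le_trans zero_le_one (logE_ge_one r)
  have h2 : (0:ℝ) ≤ 1 + r ^ ((d:ℝ) + α) := by positivity
  exact div_nonneg h1 h2

lemma Wfn_key (d : ℕ) (hd : 0 < d) (α : ℝ) (hα : 0 < α) (r' r : ℝ)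
    (hr' : 0 ≤ r') (hrr : r' ≤ r) : Wfn d α r ≤ 6 * Wfn d α r' := by
  set p : ℝ := (d:ℝ) + α with hpdef
  have hp : 1 ≤ p := by
    have : (1:ℝ) ≤ (d:ℝ) := by exact_mod_cast hd
    simp only [hpdef]; linarith
  have hp0 : 0 ≤ p := by linarith
  have hr0 : 0 ≤ r := le_trans hr' hrr
  have hN1 : 1 ≤ Real.log (Real.exp 1 + r ^ 2) := logE_ge_one r
  have hN'1 : 1 ≤ Real.log (Real.exp 1 + r' ^ 2) := logE_ge_one r'
  have hD : (0:ℝ) < 1 + r ^ p := by positivity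
  have hD' : (0:ℝ) < 1 + r' ^ p := by positivity
  unfold Wfn
  rw [← hpdef, ← mul_div_assoc, div_le_div_iff₀ hD hD']
  set N : ℝ := Real.log (Real.exp 1 + r ^ 2)
  set N' : ℝ := Real.log (Real.exp 1 + r' ^ 2)
  rcases le_or_gt r' 1 with hr'1 | hr'1
  · -- case r' ≤ 1 : D' ≤ 2
    have hD'2 : 1 + r' ^ p ≤ 2 := by
      have : r' ^ p ≤ 1 := Real.rpow_le_one hr' hr'1 hp0
      linarith
    have hNle : N ≤ 1 + 2 * r := logE_le r hr0
    rcases le_or_gt r 1 with hr1 | hr1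
    · -- r ≤ 1 : N ≤ 3, so N * D' ≤ 6 ≤ 6 N' D
      have hrp0 : 0 ≤ r ^ p := Real.rpow_nonneg hr0 p
      have h6 : (1:ℝ) ≤ N' * (1 + r ^ p) := by nlinarith
      nlinarith
    · -- r ≥ 1 : r ≤ r^p
      have hrp : r ≤ r ^ p := by
        calc r = r ^ (1:ℝ) := (Real.rpow_one r).symm
          _ ≤ r ^ p := Real.rpow_le_rpow_of_exponent_le hr1.le hp
      nlinarith
  · -- case r' > 1
    have hr'0 : (0:ℝ) < r' := lt_trans one_pos hr'1
    set u : ℝ := r / r' with hudef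
    have hu : 1 ≤ u := (one_le_div hr'0).2 hrr
    have hu0 : (0:ℝ) < u := lt_of_lt_of_le one_pos hu
    have hru : r = u * r' := by rw [hudef, div_mul_cancel₀ r hr'0.ne']
    have hLu0 : 0 ≤ Real.log u := Real.log_nonneg hu
    have hLu : Real.log u ≤ u - 1 := Real.log_le_sub_one_of_pos hu0
    have hup : u ≤ u ^ p := by
      calc u = u ^ (1:ℝ) := (Real.rpow_one u).symm
        _ ≤ u ^ p := Real.rpow_le_rpow_of_exponent_le hu hp
    have hr'p1 : 1 ≤ r' ^ p := by
      calc (1:ℝ) = r' ^ (0:ℝ) := (Real.rpow_zero r').symm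
        _ ≤ r' ^ p := Real.rpow_le_rpow_of_exponent_le hr'1.le hp0
    have hrp : r ^ p = u ^ p * r' ^ p := by
      rw [hru, Real.mul_rpow hu0.le hr'0.le]
    have hup0 : 0 ≤ u ^ p := Real.rpow_nonneg hu0.le p
    have hr'p0 : 0 ≤ r' ^ p := Real.rpow_nonneg hr'0.le p
    -- N ≤ 2 log u + N'
    have h1 : Real.exp 1 + r ^ 2 ≤ u ^ 2 * (Real.exp 1 + r' ^ 2) := by
      rw [hru]; nlinarith [Real.exp_pos 1, sq_nonneg (u - 1), sq_nonneg r']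
    have hposr : (0:ℝ) < Real.exp 1 + r ^ 2 := by nlinarith [Real.exp_pos 1, sq_nonneg r]
    have hposr' : (0:ℝ) < Real.exp 1 + r' ^ 2 := by nlinarith [Real.exp_pos 1, sq_nonneg r']
    have hN : N ≤ 2 * Real.log u + N' := by
      have h2 : N ≤ Real.log (u ^ 2 * (Real.exp 1 + r' ^ 2)) := Real.log_le_log hposr h1
      have h3 : Real.log (u ^ 2 * (Real.exp 1 + r' ^ 2)) = 2 * Real.log u + N' := by
        rw [Real.log_mul (by positivity) hposr'.ne', Real.log_pow]
        push_cast; ring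
      linarith [h2, h3.le, h3.ge]
    set L : ℝ := Real.log u
    -- chain
    have hNq : (1:ℝ) ≤ N' * (r' ^ p) := le_trans hN'1 (le_mul_of_one_le_right (by linarith) hr'p1)
    have step2 : (2 * L + N') * (1 + r' ^ p) ≤ ((2 * L + 1) * N') * (2 * r' ^ p) := by
      have k1 : 0 ≤ L * (N' * r' ^ p - 1) := mul_nonneg hLu0 (by linarith)
      have k2 : 0 ≤ (L * (N' - 1)) * r' ^ p :=
        mul_nonneg (mul_nonneg hLu0 (by linarith)) hr'p0
      have k3 : 0 ≤ N' * (r' ^ p - 1) := mul_nonneg (by linarith) (by linarith)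
      have expand : ((2 * L + 1) * N') * (2 * r' ^ p) - (2 * L + N') * (1 + r' ^ p) =
          2 * (L * (N' * r' ^ p - 1)) + 2 * ((L * (N' - 1)) * r' ^ p) + (N' * (r' ^ p - 1)) := by
        ring
      linarith
    have step3 : ((2 * L + 1) * N') * (2 * r' ^ p) ≤ (2 * u ^ p * N') * (2 * r' ^ p) := by
      have hN'0 : 0 ≤ N' := by linarith
      have h2L : (2 * L + 1) ≤ 2 * u ^ p := by linarith
      exact mul_le_mul_of_nonneg_right (mul_le_mul_of_nonneg_right h2L hN'0)
        (by positivity)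
    have step5 : 4 * N' * (u ^ p * r' ^ p) ≤ 6 * N' * (1 + u ^ p * r' ^ p) := by
      have hX : 0 ≤ N' * (u ^ p * r' ^ p) :=
        mul_nonneg (by linarith) (mul_nonneg hup0 hr'p0)
      have expand : 6 * N' * (1 + u ^ p * r' ^ p) - 4 * N' * (u ^ p * r' ^ p) =
          6 * N' + 2 * (N' * (u ^ p * r' ^ p)) := by ring
      linarith
    have step1 : N * (1 + r' ^ p) ≤ (2 * L + N') * (1 + r' ^ p) :=
      mul_le_mul_of_nonneg_right hN (by linarith)
    rw [hrp]
    calc N * (1 + r' ^ p) ≤ ((2 * L + 1) * N') * (2 * r' ^ p) := le_trans step1 step2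
      _ ≤ (2 * u ^ p * N') * (2 * r' ^ p) := step3
      _ = 4 * N' * (u ^ p * r' ^ p) := by ring
      _ ≤ 6 * N' * (1 + u ^ p * r' ^ p) := step5
/-- Global upper bound on `h_k` in terms of the distance to the support:
`h_k(t,x) ≤ C k μ(ℝ^d) max(t^{-1/β - s/α}, t^{-1/β}) W(t^{-1/α} d(x,S))`. -/
theorem stmt_2 (d : ℕ) (hd : 0 < d) (α β s : ℝ) (hα : α ∈ Ioo (0:ℝ) 2)
    (hβ : 0 < β) (hs : 0 ≤ s)
    (μ : Measure (EuclideanSpace ℝ (Fin d))) [IsFiniteMeasure μ] (hμ : μ ≠ 0)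
    (S : Set (EuclideanSpace ℝ (Fin d))) (hSsupp : IsSupportOf d μ S) :
    ∃ C > 0, ∀ k > (0:ℝ), ∀ t > (0:ℝ), ∀ x : EuclideanSpace ℝ (Fin d),
      hfn d α β s μ k t x ≤
        C * k * (μ Set.univ).toReal * max (t ^ (-(1:ℝ)/β - s/α)) (t ^ (-(1:ℝ)/β)) *
          Wfn d α (t ^ (-(1:ℝ)/α) * infDist x S) := by
  obtain ⟨hα0, hα2⟩ := hα
  refine ⟨12, by norm_num, ?_⟩
  intro k hk t ht x
  have ha0 : (0:ℝ) < t ^ (-(1:ℝ)/α) := Real.rpow_pos_of_pos ht _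
  have hDd : 0 ≤ infDist x S := infDist_nonneg
  have hWb0 : 0 ≤ Wfn d α (t ^ (-(1:ℝ)/α) * infDist x S) :=
    Wfn_nonneg d α _ (mul_nonneg ha0.le hDd)
  have hA0 : (0:ℝ) < t ^ (-(1:ℝ)/β) * (1 + t ^ (-s/α)) := by
    have h1 : (0:ℝ) < t ^ (-(1:ℝ)/β) := Real.rpow_pos_of_pos ht _
    have h2 : (0:ℝ) < t ^ (-s/α) := Real.rpow_pos_of_pos ht _
    nlinarith
  set A : ℝ := t ^ (-(1:ℝ)/β) * (1 + t ^ (-s/α)) with hAdef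
  set Wb : ℝ := Wfn d α (t ^ (-(1:ℝ)/α) * infDist x S) with hWbdef
  -- a.e. pointwise bound
  have hae : ∀ᵐ y ∂μ, ‖wfn d α β s t (x - y)‖ ≤ A * (6 * Wb) := by
    have hS : ∀ᵐ y ∂μ, y ∈ S := by
      rw [MeasureTheory.ae_iff]
      exact hSsupp.2.1
    filter_upwards [hS] with y hy
    have hdist : infDist x S ≤ ‖x - y‖ := by
      have h := infDist_le_dist_of_mem (x := x) hy
      rwa [dist_eq_norm] at h
    have hle : Wfn d α (t ^ (-(1:ℝ)/α) * ‖x - y‖) ≤ 6 * Wb := by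
      rw [hWbdef]
      exact Wfn_key d hd α hα0 _ _ (mul_nonneg ha0.le hDd)
        (mul_le_mul_of_nonneg_left hdist ha0.le)
    have hW0 : 0 ≤ Wfn d α (t ^ (-(1:ℝ)/α) * ‖x - y‖) :=
      Wfn_nonneg d α _ (mul_nonneg ha0.le (norm_nonneg _))
    have heq : wfn d α β s t (x - y) = A * Wfn d α (t ^ (-(1:ℝ)/α) * ‖x - y‖) := rfl
    rw [Real.norm_eq_abs, heq, abs_of_nonneg (mul_nonneg hA0.le hW0)]
    exact mul_le_mul_of_nonneg_left hle hA0.le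
  have hI : ∫ y, wfn d α β s t (x - y) ∂μ ≤ (A * (6 * Wb)) * (μ Set.univ).toReal := by
    have h2 := MeasureTheory.norm_integral_le_of_norm_le_const (μ := μ) hae
    calc ∫ y, wfn d α β s t (x - y) ∂μ ≤ ‖∫ y, wfn d α β s t (x - y) ∂μ‖ :=
          le_abs_self _
      _ ≤ _ := h2
  -- bound A by 2 * max
  have e1 : t ^ (-(1:ℝ)/β) * t ^ (-s/α) = t ^ (-(1:ℝ)/β - s/α) := by
    rw [← Real.rpow_add ht]
    congr 1
    ring
  have hAeq : A = t ^ (-(1:ℝ)/β) + t ^ (-(1:ℝ)/β - s/α) := by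
    rw [hAdef, mul_add, mul_one, e1]
  have hAmax : A ≤ 2 * max (t ^ (-(1:ℝ)/β - s/α)) (t ^ (-(1:ℝ)/β)) := by
    have h1 := le_max_left (t ^ (-(1:ℝ)/β - s/α)) (t ^ (-(1:ℝ)/β))
    have h2 := le_max_right (t ^ (-(1:ℝ)/β - s/α)) (t ^ (-(1:ℝ)/β))
    rw [hAeq]
    linarith
  have hM : 0 ≤ (μ Set.univ).toReal := ENNReal.toReal_nonneg
  show k * ∫ y, wfn d α β s t (x - y) ∂μ ≤ _
  calc k * ∫ y, wfn d α β s t (x - y) ∂μ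
      ≤ k * ((A * (6 * Wb)) * (μ Set.univ).toReal) :=
        mul_le_mul_of_nonneg_left hI hk.le
    _ ≤ k * (((2 * max (t ^ (-(1:ℝ)/β - s/α)) (t ^ (-(1:ℝ)/β))) * (6 * Wb)) *
          (μ Set.univ).toReal) := by
        have hstep : A * (6 * Wb) ≤
            (2 * max (t ^ (-(1:ℝ)/β - s/α)) (t ^ (-(1:ℝ)/β))) * (6 * Wb) :=
          mul_le_mul_of_nonneg_right hAmax (by linarith)
        exact mul_le_mul_of_nonneg_left (mul_le_mul_of_nonneg_right hstep hM) hk.le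
    _ = 12 * k * (μ Set.univ).toReal * max (t ^ (-(1:ℝ)/β - s/α)) (t ^ (-(1:ℝ)/β)) * Wb := by
        ring
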